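/- For each i, the measure γ_i := (π_i, ȳ)_# γ on M × M is an optimal plan for the two-marginal Monge–Kantorovich problem with cost d²(x,y) and marginals μ_i and the barycenter ν = ȳ_# γ. -/

import Mathlib

open MeasureTheory
open scoped BigOperators

/-- The multi-marginal barycenter cost `c(x₁,…,x_m) = inf_y ∑ d²(xᵢ,y)/2`. -/
noncomputable def mmcost {M : Type*} [MetricSpace M] {m : ℕ} (x : Fin m → M) : ℝ :=
  ⨅ y : M, ∑ i, dist (x i) y ^ 2 / 2

section aux
variable {M : Type*} [MetricSpace M] {m : ℕ}

lemma mmcost_bddBelow (x : Fin m → M) :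
    BddBelow (Set.range fun y : M => ∑ i, dist (x i) y ^ 2 / 2) := by
  refine ⟨0, fun a ⟨y, hy⟩ => ?_⟩
  subst hy
  exact Finset.sum_nonneg fun i _ => by positivity

lemma mmcost_le (x : Fin m → M) (y : M) [Nonempty M] :
    mmcost x ≤ ∑ i, dist (x i) y ^ 2 / 2 :=
  ciInf_le (mmcost_bddBelow x) y

lemma le_mmcost (x : Fin m → M) (c : ℝ) [Nonempty M]
    (h : ∀ y, c ≤ ∑ i, dist (x i) y ^ 2 / 2) : c ≤ mmcost x :=
  le_ciInf h

lemma mmcost_nonneg (x : Fin m → M) [Nonempty M] : 0 ≤ mmcost x :=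
  le_mmcost x 0 fun y => Finset.sum_nonneg fun i _ => by positivity

lemma exists_dist_bound (M : Type*) [MetricSpace M] [CompactSpace M] [Nonempty M] :
    ∃ C : ℝ, 0 ≤ C ∧ ∀ x y : M, dist x y ≤ C := by
  obtain ⟨C, hC⟩ := Metric.isBounded_iff.mp
    (Metric.isBounded_of_compactSpace (s := (Set.univ : Set M)))
  refine ⟨max C 0, le_max_right _ _, fun x y => le_trans ?_ (le_max_left _ _)⟩
  exact hC (Set.mem_univ x) (Set.mem_univ y)

lemma mmcost_continuous [CompactSpace M] [Nonempty M] :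
    Continuous (mmcost (M := M) (m := m)) := by
  obtain ⟨C, hC0, hC⟩ := exists_dist_bound M
  set L : ℝ := m * (3 * C / 2) with hLdef
  have hL0 : 0 ≤ L := by positivity
  have key : ∀ x x' : Fin m → M, ∀ y : M,
      ∑ i, dist (x i) y ^ 2 / 2 ≤ ∑ i, dist (x' i) y ^ 2 / 2 + L * dist x x' := by
    intro x x' y
    have hdxx0 : (0:ℝ) ≤ dist x x' := dist_nonneg
    have hdxxC : dist x x' ≤ C := (dist_pi_le_iff hC0).mpr fun b => hC _ _
    have h1 : ∀ i : Fin m, dist (x i) y ^ 2 / 2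
        ≤ dist (x' i) y ^ 2 / 2 + (3 * C / 2) * dist x x' := by
      intro i
      have hd : dist (x i) y ≤ dist (x' i) y + dist x x' := by
        have := dist_triangle (x i) (x' i) y
        have h2 := dist_le_pi_dist x x' i
        linarith
      have ha : (0:ℝ) ≤ dist (x i) y := dist_nonneg
      have hb : (0:ℝ) ≤ dist (x' i) y := dist_nonneg
      have hbC : dist (x' i) y ≤ C := hC _ _
      nlinarith [mul_le_mul_of_nonneg_right hbC hdxx0, mul_le_mul_of_nonneg_right hdxxC hdxx0]
    calc ∑ i, dist (x i) y ^ 2 / 2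
        ≤ ∑ i : Fin m, (dist (x' i) y ^ 2 / 2 + (3 * C / 2) * dist x x') :=
          Finset.sum_le_sum fun i _ => h1 i
      _ = ∑ i, dist (x' i) y ^ 2 / 2 + L * dist x x' := by
          rw [Finset.sum_add_distrib, Finset.sum_const, Finset.card_univ, Fintype.card_fin,
            nsmul_eq_mul, hLdef]
          ring
  have hlip : ∀ x x' : Fin m → M, mmcost x ≤ mmcost x' + L * dist x x' := by
    intro x x'
    have : mmcost x - L * dist x x' ≤ mmcost x' :=
      le_mmcost _ _ fun y => by linarith [mmcost_le x y, key x x' y]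
    linarith
  refine (LipschitzWith.of_dist_le_mul (K := ⟨L, hL0⟩)
    (f := mmcost (M := M) (m := m)) ?_).continuous
  intro x x'
  rw [Real.dist_eq, abs_sub_le_iff]
  change mmcost x - mmcost x' ≤ L * dist x x' ∧ mmcost x' - mmcost x ≤ L * dist x x'
  constructor
  · linarith [hlip x x']
  · have := hlip x' x
    rw [dist_comm x' x] at this
    linarith

lemma mmcost_le_bound [CompactSpace M] [Nonempty M] {C : ℝ} (hC : ∀ x y : M, dist x y ≤ C)
    (x : Fin m → M) : mmcost x ≤ m * (C ^ 2 / 2) := by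
  obtain ⟨y₀⟩ := ‹Nonempty M›
  refine le_trans (mmcost_le x y₀) ?_
  calc ∑ i, dist (x i) y₀ ^ 2 / 2 ≤ ∑ _i : Fin m, C ^ 2 / 2 :=
        Finset.sum_le_sum fun i _ => by
          have := hC (x i) y₀
          have := dist_nonneg (x := x i) (y := y₀)
          nlinarith
    _ = m * (C ^ 2 / 2) := by
        rw [Finset.sum_const, Finset.card_univ, Fintype.card_fin, nsmul_eq_mul]
end aux


lemma integrable_of_bound {β : Type*} [MeasurableSpace β] (P : Measure β) [IsFiniteMeasure P]
    {g : β → ℝ} (hg : AEStronglyMeasurable g P) (B : ℝ) (hB : ∀ b, |g b| ≤ B) :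
    Integrable g P :=
  Integrable.mono' (integrable_const B) hg (Filter.Eventually.of_forall fun b => hB b)


/-- `γ` is a coupling of the marginals `μ i`. -/
def IsCoupling {M : Type*} [MeasurableSpace M] {m : ℕ}
    (γ : Measure (Fin m → M)) (μ : Fin m → Measure M) : Prop :=
  ∀ i, γ.map (fun x => x i) = μ i

open ProbabilityTheory
set_option maxHeartbeats 2000000

/-- Let `γ` be the optimal multi-marginal plan for the barycenter cost on a
compact Riemannian manifold (abstracted), `μ₁ ≪ vol`, `πᵢ` the `i`-th coordinate projection,
and `ȳ` the `γ`-a.e. defined Fréchet-mean map.  Then for each `i` the measure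
`γᵢ := (πᵢ, ȳ)_# γ` on `M × M` is an optimal plan for the two-marginal Monge–Kantorovich
problem with cost `d²(x,y)` and marginals `μᵢ` and the barycenter `ν = ȳ_# γ`. -/
theorem stmt_11 {M : Type*} [MetricSpace M] [CompactSpace M] [Nonempty M]
    [MeasurableSpace M] [BorelSpace M]
    (vol : Measure M) (m : ℕ)
    (μ : Fin (m + 1) → Measure M) [∀ i, IsProbabilityMeasure (μ i)]
    (habs : μ 0 ≪ vol)
    (γ : Measure (Fin (m + 1) → M))
    (hγm : IsCoupling γ μ)
    (hopt : ∀ γ' : Measure (Fin (m + 1) → M), IsCoupling γ' μ →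
      ∫ x, mmcost x ∂γ ≤ ∫ x, mmcost x ∂γ')
    (ybar : (Fin (m + 1) → M) → M) (hybarm : Measurable ybar)
    (hybar : ∀ᵐ x ∂γ, ∀ z : M, ∑ i, dist (x i) (ybar x) ^ 2 ≤ ∑ i, dist (x i) z ^ 2)
    (i : Fin (m + 1)) :
    (γ.map (fun x => (x i, ybar x))).map Prod.fst = μ i ∧
    (γ.map (fun x => (x i, ybar x))).map Prod.snd = γ.map ybar ∧
    ∀ π : Measure (M × M), π.map Prod.fst = μ i → π.map Prod.snd = γ.map ybar →
      ∫ p, dist p.1 p.2 ^ 2 ∂(γ.map (fun x => (x i, ybar x)))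
        ≤ ∫ p, dist p.1 p.2 ^ 2 ∂π := by
  classical
  obtain ⟨C, hC0, hC⟩ := exists_dist_bound M
  have hxi : ∀ j : Fin (m+1), Measurable fun x : Fin (m+1) → M => x j :=
    fun j => measurable_pi_apply j
  have hmi : Measurable fun x : Fin (m+1) → M => (x i, ybar x) := (hxi i).prodMk hybarm
  haveI : IsProbabilityMeasure γ := by
    constructor
    have h2 : γ.map (fun x => x 0) Set.univ = 1 := by rw [hγm 0]; exact measure_univ
    rwa [Measure.map_apply (hxi 0) MeasurableSet.univ, Set.preimage_univ] at h2
  refine ⟨?_, ?_, ?_⟩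
  · rw [Measure.map_map measurable_fst hmi]
    have h : Prod.fst ∘ (fun x : Fin (m+1) → M => (x i, ybar x)) = fun x => x i := rfl
    rw [h]; exact hγm i
  · rw [Measure.map_map measurable_snd hmi]
    have h : Prod.snd ∘ (fun x : Fin (m+1) → M => (x i, ybar x)) = ybar := rfl
    rw [h]
  intro π hπ1 hπ2
  haveI : IsProbabilityMeasure π := by
    constructor
    have h2 : π.map Prod.fst Set.univ = 1 := by rw [hπ1]; exact measure_univ
    rwa [Measure.map_apply measurable_fst MeasurableSet.univ, Set.preimage_univ] at h2
  -- abbreviations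
  haveI : IsProbabilityMeasure (γ.map ybar) := Measure.isProbabilityMeasure_map hybarm.aemeasurable
  set ν : Measure M := γ.map ybar with hνdef
  -- the lifted plan ρ = (ybar, id)_# γ and its disintegration κ
  have hρm : Measurable fun x : Fin (m+1) → M => (ybar x, x) := hybarm.prodMk measurable_id
  set ρ : Measure (M × (Fin (m+1) → M)) := γ.map (fun x => (ybar x, x)) with hρdef
  haveI : IsProbabilityMeasure ρ := Measure.isProbabilityMeasure_map hρm.aemeasurable
  have hρfst : ρ.fst = ν := by
    show ρ.map Prod.fst = ν
    rw [hρdef, Measure.map_map measurable_fst hρm]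
    have h : Prod.fst ∘ (fun x : Fin (m+1) → M => (ybar x, x)) = ybar := rfl
    rw [h, hνdef]
  set κ : Kernel M (Fin (m+1) → M) := ρ.condKernel with hκdef
  have hρeq : ν ⊗ₘ κ = ρ := by rw [← hρfst, hκdef]; exact ρ.disintegrate ρ.condKernel
  -- swapped plan π' and its disintegration η
  set π' : Measure (M × M) := π.map Prod.swap with hπ'def
  haveI : IsProbabilityMeasure π' := Measure.isProbabilityMeasure_map measurable_swap.aemeasurable
  have hπ'fst : π'.fst = ν := by
    show π'.map Prod.fst = ν
    rw [hπ'def, Measure.map_map measurable_fst measurable_swap]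
    have h : Prod.fst ∘ (Prod.swap : M × M → M × M) = Prod.snd := rfl
    rw [h]; exact hπ2
  set η : Kernel M M := π'.condKernel with hηdef
  have hπ'eq : ν ⊗ₘ η = π' := by rw [← hπ'fst, hηdef]; exact π'.disintegrate π'.condKernel
  -- the glued measure
  set θ : Measure (M × ((Fin (m+1) → M) × M)) := ν ⊗ₘ (κ ×ₖ η) with hθdef
  haveI : IsProbabilityMeasure θ := by rw [hθdef]; infer_instance
  have hm1 : Measurable fun p : M × ((Fin (m+1) → M) × M) => (p.1, p.2.1) :=
    measurable_fst.prodMk (measurable_fst.comp measurable_snd)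
  have hm2 : Measurable fun p : M × ((Fin (m+1) → M) × M) => (p.1, p.2.2) :=
    measurable_fst.prodMk (measurable_snd.comp measurable_snd)
  have hproj1 : θ.map (fun p => (p.1, p.2.1)) = ν ⊗ₘ κ := by
    ext s hs
    rw [Measure.map_apply hm1 hs, hθdef, Measure.compProd_apply (hm1 hs),
      Measure.compProd_apply hs]
    refine lintegral_congr fun a => ?_
    have hset : Prod.mk a ⁻¹' ((fun p : M × ((Fin (m+1) → M) × M) => (p.1, p.2.1)) ⁻¹' s)
        = (Prod.mk a ⁻¹' s) ×ˢ (Set.univ : Set M) := by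
      ext q
      simp [Set.mem_preimage, Set.mem_prod]
    rw [hset, Kernel.prod_apply, Measure.prod_prod, measure_univ, mul_one]
  have hproj2 : θ.map (fun p => (p.1, p.2.2)) = ν ⊗ₘ η := by
    ext s hs
    rw [Measure.map_apply hm2 hs, hθdef, Measure.compProd_apply (hm2 hs),
      Measure.compProd_apply hs]
    refine lintegral_congr fun a => ?_
    have hset : Prod.mk a ⁻¹' ((fun p : M × ((Fin (m+1) → M) × M) => (p.1, p.2.2)) ⁻¹' s)
        = (Set.univ : Set (Fin (m+1) → M)) ×ˢ (Prod.mk a ⁻¹' s) := by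
      ext q
      simp [Set.mem_preimage, Set.mem_prod]
    rw [hset, Kernel.prod_apply, Measure.prod_prod, measure_univ, one_mul]
  -- the competitor multi-marginal plan γ'
  have hupd : Measurable fun p : M × ((Fin (m+1) → M) × M) => Function.update p.2.1 i p.2.2 := by
    apply measurable_pi_lambda
    intro j
    have heq : (fun p : M × ((Fin (m+1) → M) × M) => Function.update p.2.1 i p.2.2 j)
        = fun p => if j = i then p.2.2 else p.2.1 j := by
      funext p; rw [Function.update_apply]
    rw [heq]
    by_cases hj : j = i
    · simp only [if_pos hj]; exact measurable_snd.comp measurable_snd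
    · simp only [if_neg hj]; exact (hxi j).comp (measurable_fst.comp measurable_snd)
  set γ' : Measure (Fin (m+1) → M) := θ.map (fun p => Function.update p.2.1 i p.2.2) with hγ'def
  have hcoup : IsCoupling γ' μ := by
    intro j
    rw [hγ'def, Measure.map_map (hxi j) hupd]
    by_cases hj : j = i
    · subst hj
      have heq : ((fun x : Fin (m+1) → M => x j)
          ∘ fun p : M × ((Fin (m+1) → M) × M) => Function.update p.2.1 j p.2.2)
          = fun p => p.2.2 := by
        funext p; simp [Function.comp, Function.update_self]
      rw [heq]
      have heq2 : (fun p : M × ((Fin (m+1) → M) × M) => p.2.2)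
          = Prod.snd ∘ (fun p : M × ((Fin (m+1) → M) × M) => (p.1, p.2.2)) := rfl
      have hmm : (θ.map (fun p : M × ((Fin (m+1) → M) × M) => (p.1, p.2.2))).map Prod.snd
          = θ.map (Prod.snd ∘ (fun p : M × ((Fin (m+1) → M) × M) => (p.1, p.2.2))) :=
        Measure.map_map measurable_snd hm2
      rw [heq2, ← hmm, hproj2, hπ'eq, hπ'def, Measure.map_map measurable_snd measurable_swap]
      have h : Prod.snd ∘ (Prod.swap : M × M → M × M) = Prod.fst := rfl
      rw [h]; exact hπ1
    · have heq : ((fun x : Fin (m+1) → M => x j)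
          ∘ fun p : M × ((Fin (m+1) → M) × M) => Function.update p.2.1 i p.2.2)
          = fun p => p.2.1 j := by
        funext p; simp [Function.comp, Function.update_of_ne hj]
      rw [heq]
      have heq2 : (fun p : M × ((Fin (m+1) → M) × M) => p.2.1 j)
          = (fun q : M × (Fin (m+1) → M) => q.2 j) ∘ (fun p : M × ((Fin (m+1) → M) × M) => (p.1, p.2.1)) := rfl
      have hq : Measurable fun q : M × (Fin (m+1) → M) => q.2 j :=
        (hxi j).comp measurable_snd
      have hmm : (θ.map (fun p : M × ((Fin (m+1) → M) × M) => (p.1, p.2.1))).map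
            (fun q : M × (Fin (m+1) → M) => q.2 j)
          = θ.map ((fun q : M × (Fin (m+1) → M) => q.2 j)
              ∘ (fun p : M × ((Fin (m+1) → M) × M) => (p.1, p.2.1))) :=
        Measure.map_map hq hm1
      rw [heq2, ← hmm, hproj1, hρeq, hρdef, Measure.map_map hq hρm]
      have h : (fun q : M × (Fin (m+1) → M) => q.2 j)
          ∘ (fun x : Fin (m+1) → M => (ybar x, x)) = fun x => x j := rfl
      rw [h]; exact hγm j
  -- cost functions and their measurability
  have hgmeas : Measurable fun q : M × (Fin (m+1) → M) => ∑ j, dist (q.2 j) q.1 ^ 2 / 2 := by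
    apply Finset.measurable_sum
    intro j _
    exact ((((hxi j).comp measurable_snd).dist measurable_fst).pow_const 2).div_const 2
  have hG1 : Measurable fun p : M × ((Fin (m+1) → M) × M) => ∑ j, dist (p.2.1 j) p.1 ^ 2 / 2 :=
    hgmeas.comp hm1
  have hG2 : Measurable fun p : M × ((Fin (m+1) → M) × M) => dist (p.2.1 i) p.1 ^ 2 / 2 :=
    ((((hxi i).comp (measurable_fst.comp measurable_snd)).dist measurable_fst).pow_const 2).div_const 2
  have hG3 : Measurable fun p : M × ((Fin (m+1) → M) × M) => dist p.2.2 p.1 ^ 2 / 2 :=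
    (((measurable_snd.comp measurable_snd).dist measurable_fst).pow_const 2).div_const 2
  -- bounds
  have hdb : ∀ (a b : M), |dist a b ^ 2 / 2| ≤ C ^ 2 / 2 := by
    intro a b
    rw [abs_of_nonneg (by positivity)]
    have h1 := hC a b
    have h2 : (0:ℝ) ≤ dist a b := dist_nonneg
    nlinarith
  have hsb : ∀ (y : M) (x : Fin (m+1) → M), |∑ j, dist (x j) y ^ 2 / 2| ≤ (m+1) * (C ^ 2 / 2) := by
    intro y x
    rw [abs_of_nonneg (Finset.sum_nonneg fun j _ => by positivity)]
    calc ∑ j, dist (x j) y ^ 2 / 2 ≤ ∑ _j : Fin (m+1), C ^ 2 / 2 :=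
          Finset.sum_le_sum fun j _ => le_trans (le_abs_self _) (hdb _ _)
      _ = (m+1) * (C ^ 2 / 2) := by
          rw [Finset.sum_const, Finset.card_univ, Fintype.card_fin, nsmul_eq_mul]
          push_cast; ring
  -- integrability over θ
  have intG1 : Integrable (fun p : M × ((Fin (m+1) → M) × M) => ∑ j, dist (p.2.1 j) p.1 ^ 2 / 2) θ :=
    integrable_of_bound θ hG1.aestronglyMeasurable _ fun p => hsb _ _
  have intG2 : Integrable (fun p : M × ((Fin (m+1) → M) × M) => dist (p.2.1 i) p.1 ^ 2 / 2) θ :=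
    integrable_of_bound θ hG2.aestronglyMeasurable _ fun p => hdb _ _
  have intG3 : Integrable (fun p : M × ((Fin (m+1) → M) × M) => dist p.2.2 p.1 ^ 2 / 2) θ :=
    integrable_of_bound θ hG3.aestronglyMeasurable _ fun p => hdb _ _
  have hmmmeas : Measurable (mmcost (M := M) (m := m+1)) := mmcost_continuous.measurable
  have intmm : Integrable (fun p : M × ((Fin (m+1) → M) × M) =>
      mmcost (Function.update p.2.1 i p.2.2)) θ := by
    refine integrable_of_bound θ (hmmmeas.comp hupd).aestronglyMeasurable ((m+1) * (C ^ 2 / 2)) fun p => ?_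
    rw [abs_of_nonneg (mmcost_nonneg _)]
    have := mmcost_le_bound hC (Function.update p.2.1 i p.2.2)
    push_cast at this ⊢
    linarith
  -- pointwise inequality
  have hpt : ∀ p : M × ((Fin (m+1) → M) × M),
      mmcost (Function.update p.2.1 i p.2.2)
        ≤ (∑ j, dist (p.2.1 j) p.1 ^ 2 / 2) - dist (p.2.1 i) p.1 ^ 2 / 2 + dist p.2.2 p.1 ^ 2 / 2 := by
    intro p
    have h1 := mmcost_le (Function.update p.2.1 i p.2.2) p.1
    have heq : (fun j => dist (Function.update p.2.1 i p.2.2 j) p.1 ^ 2 / 2)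
        = Function.update (fun j => dist (p.2.1 j) p.1 ^ 2 / 2) i (dist p.2.2 p.1 ^ 2 / 2) := by
      funext j
      by_cases hj : j = i
      · subst hj; simp [Function.update_self]
      · simp [Function.update_of_ne hj]
    rw [show (∑ j, dist (Function.update p.2.1 i p.2.2 j) p.1 ^ 2 / 2)
        = ∑ j, Function.update (fun j => dist (p.2.1 j) p.1 ^ 2 / 2) i (dist p.2.2 p.1 ^ 2 / 2) j
        from by rw [← heq], Finset.sum_update_of_mem (Finset.mem_univ i)] at h1
    have h2 := Finset.sum_eq_sum_sdiff_singleton_add (Finset.mem_univ i)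
      (fun j => dist (p.2.1 j) p.1 ^ 2 / 2)
    linarith
  -- a.e. identity  mmcost x = ∑ d(x j, ybar x)² / 2
  have hae : ∀ᵐ x ∂γ, mmcost x = ∑ j, dist (x j) (ybar x) ^ 2 / 2 := by
    filter_upwards [hybar] with x hx
    have h1 := mmcost_le x (ybar x)
    have h2 : (∑ j, dist (x j) (ybar x) ^ 2 / 2) ≤ mmcost x := by
      refine le_mmcost _ _ fun y => ?_
      have := hx y
      rw [← Finset.sum_div, ← Finset.sum_div]
      linarith
    linarith
  -- transporting integrals
  have hint1 : ∫ p, (∑ j, dist (p.2.1 j) p.1 ^ 2 / 2) ∂θ = ∫ x, mmcost x ∂γ := by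
    calc ∫ p, (∑ j, dist (p.2.1 j) p.1 ^ 2 / 2) ∂θ
        = ∫ q, (∑ j, dist (q.2 j) q.1 ^ 2 / 2) ∂(θ.map fun p => (p.1, p.2.1)) := by
          rw [integral_map hm1.aemeasurable hgmeas.aestronglyMeasurable]
      _ = ∫ q, (∑ j, dist (q.2 j) q.1 ^ 2 / 2) ∂ρ := by rw [hproj1, hρeq]
      _ = ∫ x, (∑ j, dist (x j) (ybar x) ^ 2 / 2) ∂γ := by
          rw [hρdef, integral_map hρm.aemeasurable hgmeas.aestronglyMeasurable]
      _ = ∫ x, mmcost x ∂γ := (integral_congr_ae (hae.mono fun x hx => hx.symm))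
  have hg2meas : Measurable fun q : M × (Fin (m+1) → M) => dist (q.2 i) q.1 ^ 2 / 2 :=
    ((((hxi i).comp measurable_snd).dist measurable_fst).pow_const 2).div_const 2
  have hint2 : ∫ p, dist (p.2.1 i) p.1 ^ 2 / 2 ∂θ = ∫ x, dist (x i) (ybar x) ^ 2 / 2 ∂γ := by
    calc ∫ p, dist (p.2.1 i) p.1 ^ 2 / 2 ∂θ
        = ∫ q, dist (q.2 i) q.1 ^ 2 / 2 ∂(θ.map fun p => (p.1, p.2.1)) := by
          rw [integral_map hm1.aemeasurable hg2meas.aestronglyMeasurable]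
      _ = ∫ q, dist (q.2 i) q.1 ^ 2 / 2 ∂ρ := by rw [hproj1, hρeq]
      _ = ∫ x, dist (x i) (ybar x) ^ 2 / 2 ∂γ := by
          rw [hρdef, integral_map hρm.aemeasurable hg2meas.aestronglyMeasurable]
  have hg3meas : Measurable fun q : M × M => dist q.2 q.1 ^ 2 / 2 :=
    ((measurable_snd.dist measurable_fst).pow_const 2).div_const 2
  have hint3 : ∫ p, dist p.2.2 p.1 ^ 2 / 2 ∂θ = ∫ p, dist p.1 p.2 ^ 2 / 2 ∂π := by
    calc ∫ p, dist p.2.2 p.1 ^ 2 / 2 ∂θ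
        = ∫ q, dist q.2 q.1 ^ 2 / 2 ∂(θ.map fun p => (p.1, p.2.2)) := by
          rw [integral_map hm2.aemeasurable hg3meas.aestronglyMeasurable]
      _ = ∫ q, dist q.2 q.1 ^ 2 / 2 ∂π' := by rw [hproj2, hπ'eq]
      _ = ∫ p, dist p.1 p.2 ^ 2 / 2 ∂π := by
          rw [hπ'def, integral_map measurable_swap.aemeasurable hg3meas.aestronglyMeasurable]
          simp [Prod.swap]
  -- optimality chain
  have hchain : ∫ x, mmcost x ∂γ
      ≤ ∫ x, mmcost x ∂γ - ∫ x, dist (x i) (ybar x) ^ 2 / 2 ∂γ + ∫ p, dist p.1 p.2 ^ 2 / 2 ∂π := by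
    have h1 : ∫ x, mmcost x ∂γ ≤ ∫ x, mmcost x ∂γ' := hopt γ' hcoup
    have h2 : ∫ x, mmcost x ∂γ' = ∫ p, mmcost (Function.update p.2.1 i p.2.2) ∂θ := by
      rw [hγ'def, integral_map hupd.aemeasurable
        mmcost_continuous.aestronglyMeasurable]
    have h3 : ∫ p, mmcost (Function.update p.2.1 i p.2.2) ∂θ
        ≤ ∫ p, ((∑ j, dist (p.2.1 j) p.1 ^ 2 / 2) - dist (p.2.1 i) p.1 ^ 2 / 2
            + dist p.2.2 p.1 ^ 2 / 2) ∂θ :=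
      integral_mono intmm ((intG1.sub intG2).add intG3) hpt
    have h4 : ∫ p, ((∑ j, dist (p.2.1 j) p.1 ^ 2 / 2) - dist (p.2.1 i) p.1 ^ 2 / 2
          + dist p.2.2 p.1 ^ 2 / 2) ∂θ
        = ∫ p, (∑ j, dist (p.2.1 j) p.1 ^ 2 / 2) ∂θ - ∫ p, dist (p.2.1 i) p.1 ^ 2 / 2 ∂θ
          + ∫ p, dist p.2.2 p.1 ^ 2 / 2 ∂θ := by
      have intG12 : Integrable (fun p : M × ((Fin (m+1) → M) × M) =>
          (∑ j, dist (p.2.1 j) p.1 ^ 2 / 2) - dist (p.2.1 i) p.1 ^ 2 / 2) θ := intG1.sub intG2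
      rw [integral_add intG12 intG3, integral_sub intG1 intG2]
    rw [h2] at h1
    rw [h4, hint1, hint2, hint3] at h3
    linarith
  -- conclude
  have hmain : ∫ x, dist (x i) (ybar x) ^ 2 / 2 ∂γ ≤ ∫ p, dist p.1 p.2 ^ 2 / 2 ∂π := by
    linarith
  have hLHS : ∫ p, dist p.1 p.2 ^ 2 ∂(γ.map (fun x => (x i, ybar x)))
      = ∫ x, dist (x i) (ybar x) ^ 2 ∂γ := by
    rw [integral_map hmi.aemeasurable
      ((measurable_fst.dist measurable_snd).pow_const 2).aestronglyMeasurable]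
  rw [hLHS]
  have e1 : ∫ x, dist (x i) (ybar x) ^ 2 / 2 ∂γ = (∫ x, dist (x i) (ybar x) ^ 2 ∂γ) / 2 :=
    integral_div 2 _
  have e2 : ∫ p, dist p.1 p.2 ^ 2 / 2 ∂π = (∫ p, dist p.1 p.2 ^ 2 ∂π) / 2 :=
    integral_div 2 _
  rw [e1, e2] at hmain
  linarith
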